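/- For every integer r ≥ 2 and every positive integer n divisible by 3r−1, there exists a coloured graph G on n vertices that is 𝓕_{2r+1}-free, has δ(G) = ((6r−8)/(3r−1))·n, and admits no homomorphism to RK_r. Consequently, the constant (6r−8)/(3r−1) in the minimum degree condition of the odd main theorem cannot be lowered. -/

import Mathlib

/-- A coloured graph structure on a weight function: symmetric, `{0,1,2}`-valued,
vanishing on the diagonal. -/
def IsColoured {V : Type*} (w : V → V → ℕ) : Prop :=
  (∀ x y, w x y = w y x) ∧ (∀ x y, w x y ≤ 2) ∧ (∀ x, w x x = 0)

/-- The coloured graph with weight function `f` on `Fin m` is a subgraph of `(V, w)`. -/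
def HasSub {V : Type*} (w : V → V → ℕ) {m : ℕ} (f : Fin m → Fin m → ℕ) : Prop :=
  ∃ φ : Fin m → V, Function.Injective φ ∧ ∀ x y, f x y ≤ w (φ x) (φ y)

/-- The red clique `RK_m`: every edge has weight `2`. -/
def RK (m : ℕ) : Fin m → Fin m → ℕ := fun x y => if x = y then 0 else 2

/-- The blue clique `BK_m`: every edge has weight `1`. -/
def BK (m : ℕ) : Fin m → Fin m → ℕ := fun x y => if x = y then 0 else 1

/-- The coloured graph `G_{t,i}` of order `t - i`: a red clique `RK_i` (the first `i`
vertices) and a blue clique `BK_{t-2i}`, joined by edges of weight `1`. -/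
def Gt (t i : ℕ) : Fin (t - i) → Fin (t - i) → ℕ :=
  fun x y => if x = y then 0 else if x.val < i ∧ y.val < i then 2 else 1

/-- `(V, w)` is `𝓕_t`-free, where `𝓕_t = {G_{t,i} : 1 ≤ i ≤ t/2}`. -/
def FamFree {V : Type*} (w : V → V → ℕ) (t : ℕ) : Prop :=
  ∀ i, 1 ≤ i → 2 * i ≤ t → ¬ HasSub w (Gt t i)

namespace OddOpt

/-- adjacency in the pentagon `C₅`. -/
def adj (a b : Fin 5) : Bool := ((a.val + 1) % 5 == b.val) || ((b.val + 1) % 5 == a.val)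

/-- The vertex set of the construction: `r-2` parts of size `3k` and five pentagon
groups of size `k`. -/
abbrev S (r k : ℕ) := (Fin (r - 2) × Fin (3 * k)) ⊕ (Fin 5 × Fin k)

/-- The weight function of the construction. -/
def w' {r k : ℕ} : S r k → S r k → ℕ
  | .inl (i, _), .inl (j, _) => if i = j then 0 else 2
  | .inr (a, _), .inr (b, _) => if a = b then 0 else if adj a b then 2 else 0
  | _, _ => 2

lemma adj_comm (a b : Fin 5) : adj a b = adj b a := by
  revert a b; decide

lemma w'_symm {r k : ℕ} (s t : S r k) : w' s t = w' t s := by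
  rcases s with ⟨a, c⟩ | ⟨a, c⟩ <;> rcases t with ⟨b, d⟩ | ⟨b, d⟩ <;> simp only [w']
  · rcases eq_or_ne a b with rfl | h
    · simp
    · rw [if_neg h, if_neg h.symm]
  · rcases eq_or_ne a b with rfl | h
    · simp
    · rw [if_neg h, if_neg h.symm, adj_comm]

lemma w'_le {r k : ℕ} (s t : S r k) : w' s t ≤ 2 := by
  rcases s with ⟨a, c⟩ | ⟨a, c⟩ <;> rcases t with ⟨b, d⟩ | ⟨b, d⟩ <;> simp only [w'] <;>
    first
      | rfl
      | (split_ifs <;> omega)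

lemma w'_diag {r k : ℕ} (s : S r k) : w' s s = 0 := by
  rcases s with ⟨a, c⟩ | ⟨a, c⟩ <;> simp [w']

lemma sum_ite_ne {α : Type*} [Fintype α] [DecidableEq α] (i : α) (c : ℕ) :
    ∑ j : α, (if i = j then 0 else c) = (Fintype.card α - 1) * c := by
  classical
  rw [Finset.sum_ite, Finset.sum_const, Finset.sum_const, smul_eq_mul, smul_eq_mul,
    mul_zero, zero_add]
  congr 1
  have h1 : Finset.univ.filter (fun j => ¬ i = j) = Finset.univ.erase i := by
    ext j; simp [eq_comm, Ne]
  rw [h1, Finset.card_erase_of_mem (Finset.mem_univ i), Finset.card_univ]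

lemma pentagon_deg (a : Fin 5) :
    ∑ b : Fin 5, (if a = b then 0 else if adj a b then 2 else 0) = 4 := by
  revert a; decide

lemma sum_w' {r k : ℕ} (hr : 2 ≤ r) (t : S r k) :
    ∑ s : S r k, w' t s = (6 * r - 8) * k := by
  rw [Fintype.sum_sum_type]
  rcases t with ⟨i, c⟩ | ⟨a, c⟩
  · have hr3 : 3 ≤ r := by have := i.2; omega
    have h1 : ∑ x : Fin (r - 2) × Fin (3 * k), w' (Sum.inl (i, c)) (Sum.inl x)
        = (r - 3) * (6 * k) := by
      rw [Fintype.sum_prod_type]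
      have : ∀ j : Fin (r - 2), ∑ d : Fin (3 * k),
          w' (Sum.inl (i, c)) (Sum.inl (j, d)) = (if i = j then 0 else 6 * k) := by
        intro j
        simp only [w']
        split_ifs <;> simp [Finset.sum_const, mul_comm] <;> ring
      rw [Finset.sum_congr rfl (fun j _ => this j), sum_ite_ne, Fintype.card_fin]
      have : r - 2 - 1 = r - 3 := by omega
      rw [this]
    have h2 : ∑ x : Fin 5 × Fin k, w' (Sum.inl (i, c)) (Sum.inr x) = 10 * k := by
      have : ∀ x : Fin 5 × Fin k, w' (Sum.inl (i, c)) (Sum.inr x) = 2 := by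
        rintro ⟨a, d⟩; rfl
      rw [Finset.sum_congr rfl (fun x _ => this x), Finset.sum_const, smul_eq_mul,
        Finset.card_univ, Fintype.card_prod, Fintype.card_fin, Fintype.card_fin]
      ring
    rw [h1, h2]
    obtain ⟨s, rfl⟩ : ∃ s, r = s + 3 := ⟨r - 3, by omega⟩
    have e1 : s + 3 - 3 = s := by omega
    have e2 : 6 * (s + 3) - 8 = 6 * s + 10 := by omega
    rw [e1, e2]; ring
  · have h1 : ∑ x : Fin (r - 2) × Fin (3 * k), w' (Sum.inr (a, c)) (Sum.inl x)
        = (r - 2) * (6 * k) := by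
      have : ∀ x : Fin (r - 2) × Fin (3 * k), w' (Sum.inr (a, c)) (Sum.inl x) = 2 := by
        rintro ⟨j, d⟩; rfl
      rw [Finset.sum_congr rfl (fun x _ => this x), Finset.sum_const, smul_eq_mul,
        Finset.card_univ, Fintype.card_prod, Fintype.card_fin, Fintype.card_fin]
      ring
    have h2 : ∑ x : Fin 5 × Fin k, w' (Sum.inr (a, c) : S r k) (Sum.inr x) = 4 * k := by
      rw [Fintype.sum_prod_type]
      have : ∀ b : Fin 5, ∑ d : Fin k, w' (Sum.inr (a, c) : S r k) (Sum.inr (b, d))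
          = (if a = b then 0 else if adj a b then 2 else 0) * k := by
        intro b
        simp only [w', Finset.sum_const, smul_eq_mul, Finset.card_univ, Fintype.card_fin]
        ring
      rw [Finset.sum_congr rfl (fun b _ => this b), ← Finset.sum_mul, pentagon_deg]
    rw [h1, h2]
    obtain ⟨s, rfl⟩ : ∃ s, r = s + 2 := ⟨r - 2, by omega⟩
    have e1 : s + 2 - 2 = s := by omega
    have e2 : 6 * (s + 2) - 8 = 6 * s + 4 := by omega
    rw [e1, e2]; ring

lemma three_in_two {α : Type*} [DecidableEq α] {S : Finset α} (hS : S.card ≤ 2)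
    {a b c : α} (ha : a ∈ S) (hb : b ∈ S) (hc : c ∈ S) (hab : a ≠ b) (hbc : b ≠ c) :
    a = c := by
  by_contra hac
  have hsub : ({a, b, c} : Finset α) ⊆ S := by
    intro x hx
    simp only [Finset.mem_insert, Finset.mem_singleton] at hx
    rcases hx with rfl | rfl | rfl <;> assumption
  have hcard : ({a, b, c} : Finset α).card = 3 := by
    rw [Finset.card_insert_of_notMem (by simp [hab, hac]),
      Finset.card_insert_of_notMem (by simp [hbc]), Finset.card_singleton]
  have := Finset.card_le_card hsub
  omega

lemma no_triangle : ∀ a b c : Fin 5, adj a b → adj b c → adj a c → a ≠ b → b ≠ c →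
    a ≠ c → False := by decide


lemma w'_inl_inl {r k : ℕ} (i j : Fin (r - 2)) (c d : Fin (3 * k)) :
    w' (Sum.inl (i, c) : S r k) (Sum.inl (j, d)) = if i = j then 0 else 2 := rfl

lemma w'_inl_inr {r k : ℕ} (i : Fin (r - 2)) (c : Fin (3 * k)) (a : Fin 5) (d : Fin k) :
    w' (Sum.inl (i, c) : S r k) (Sum.inr (a, d)) = 2 := rfl

lemma w'_inr_inl {r k : ℕ} (a : Fin 5) (c : Fin k) (j : Fin (r - 2)) (d : Fin (3 * k)) :
    w' (Sum.inr (a, c) : S r k) (Sum.inl (j, d)) = 2 := rfl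

lemma w'_inr_inr {r k : ℕ} (a b : Fin 5) (c d : Fin k) :
    w' (Sum.inr (a, c) : S r k) (Sum.inr (b, d)) =
      if a = b then 0 else if adj a b then 2 else 0 := rfl

lemma degree_eq (r n : ℕ) (hr : 2 ≤ r) (k : ℕ) (hk : n = (3 * r - 1) * k)
    (e : Fin n ≃ S r k) (x : Fin n) :
    ∑ y : Fin n, (w' (e x) (e y) : ℝ) = (6 * (r : ℝ) - 8) / (3 * (r : ℝ) - 1) * (n : ℝ) := by
  have hnat : ∑ y : Fin n, w' (e x) (e y) = (6 * r - 8) * k := by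
    rw [Equiv.sum_comp e (fun s => w' (e x) s)]
    exact sum_w' hr _
  have hcast : ∑ y : Fin n, (w' (e x) (e y) : ℝ) = ((6 * r - 8) * k : ℕ) := by
    rw [← hnat]; push_cast; rfl
  rw [hcast]
  have hr' : (2 : ℝ) ≤ (r : ℝ) := by exact_mod_cast hr
  have h8 : (8 : ℕ) ≤ 6 * r := by omega
  have h1 : (1 : ℕ) ≤ 3 * r := by omega
  have hnR : (n : ℝ) = (3 * (r : ℝ) - 1) * (k : ℝ) := by
    rw [hk]; push_cast [Nat.cast_sub h1]; ring
  have hden : (3 : ℝ) * (r : ℝ) - 1 ≠ 0 := by nlinarith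
  rw [hnR]
  push_cast [Nat.cast_sub h8]
  rw [div_mul_eq_mul_div, eq_div_iff hden]
  ring

end OddOpt

open OddOpt in
/-- Optimality in the odd case: for every `r ≥ 2` and `n > 0` divisible by `3r - 1` there
is an `𝓕_{2r+1}`-free coloured graph on `n` vertices with minimum degree exactly
`((6r-8)/(3r-1))·n` admitting no homomorphism to `RK_r`. -/
theorem odd_optimal (r n : ℕ) (hr : 2 ≤ r) (hn : 0 < n) (hdvd : 3 * r - 1 ∣ n) :
    ∃ w : Fin n → Fin n → ℕ, IsColoured w ∧ FamFree w (2 * r + 1) ∧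
      (∀ x : Fin n, (6 * (r : ℝ) - 8) / (3 * (r : ℝ) - 1) * (n : ℝ) ≤ ∑ y : Fin n, (w x y : ℝ)) ∧
      (∃ x : Fin n, ∑ y : Fin n, (w x y : ℝ) = (6 * (r : ℝ) - 8) / (3 * (r : ℝ) - 1) * (n : ℝ)) ∧
      ¬ ∃ f : Fin n → Fin r, ∀ x y : Fin n, x ≠ y → f x = f y → w x y = 0 := by
  obtain ⟨k, hk⟩ := hdvd
  have hkpos : 0 < k := by
    rcases Nat.eq_zero_or_pos k with rfl | h
    · simp [hk] at hn
    · exact h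
  have hsplitn : n = (r - 2) * (3 * k) + 5 * k := by
    obtain ⟨s, rfl⟩ : ∃ s, r = s + 2 := ⟨r - 2, by omega⟩
    have e1 : s + 2 - 2 = s := by omega
    have e2 : 3 * (s + 2) - 1 = 3 * s + 5 := by omega
    rw [hk, e1, e2]; ring
  let e : Fin n ≃ S r k :=
    (finCongr hsplitn).trans (finSumFinEquiv.symm.trans
      (Equiv.sumCongr finProdFinEquiv.symm finProdFinEquiv.symm))
  refine ⟨fun x y => w' (e x) (e y), ⟨fun x y => w'_symm _ _, fun x y => w'_le _ _,
    fun x => w'_diag _⟩, ?_, ?_, ?_, ?_⟩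
  -- 𝓕-freeness
  · intro i h1 h2
    rintro ⟨φ, hφ, hle⟩
    have him : r + 1 ≤ 2 * r + 1 - i := by omega
    -- any two distinct vertices of the copy get nonzero weight
    have hne : ∀ x y : Fin (2 * r + 1 - i), x ≠ y → w' (e (φ x)) (e (φ y)) ≠ 0 := by
      intro x y hxy
      have hg : 1 ≤ Gt (2 * r + 1) i x y := by
        unfold Gt
        rw [if_neg hxy]
        split_ifs <;> omega
      have h3 : Gt (2 * r + 1) i x y ≤ w' (e (φ x)) (e (φ y)) := hle x y
      omega
    set ℓ : Fin (2 * r + 1 - i) → Fin (r - 2) ⊕ Fin 5 :=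
      fun x => Sum.map Prod.fst Prod.fst (e (φ x)) with hℓ
    have hℓinj : Function.Injective ℓ := by
      intro x y hxy
      by_contra hxyne
      apply hne x y hxyne
      rw [hℓ] at hxy
      rcases hex : e (φ x) with ⟨a, c⟩ | ⟨a, c⟩ <;> rcases hey : e (φ y) with ⟨b, d⟩ | ⟨b, d⟩ <;>
        simp only [hex, hey, Sum.map_inl, Sum.map_inr] at hxy <;>
        first
          | (simp only [Sum.inl.injEq, Sum.inr.injEq] at hxy;
             first
               | (rw [w'_inl_inl, if_pos hxy])
               | (rw [w'_inr_inr, if_pos hxy]))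
          | (exact absurd hxy (by simp))
    have hadjuse : ∀ x y : Fin (2 * r + 1 - i), x ≠ y → ∀ a b : Fin 5,
        ℓ x = Sum.inr a → ℓ y = Sum.inr b → adj a b := by
      intro x y hxy a b hxa hyb
      have hz := hne x y hxy
      rcases hex : e (φ x) with ⟨a', c⟩ | ⟨a', c⟩ <;>
        rcases hey : e (φ y) with ⟨b', d⟩ | ⟨b', d⟩ <;>
        rw [hℓ] at hxa hyb <;>
        simp only [hex, hey, Sum.map_inl, Sum.map_inr] at hxa hyb
      · exact absurd hxa (by simp)
      · exact absurd hxa (by simp)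
      · exact absurd hyb (by simp)
      · simp only [Sum.inr.injEq] at hxa hyb
        rw [hex, hey, w'_inr_inr, hxa, hyb] at hz
        by_contra hnadj
        rcases eq_or_ne a b with rfl | hab
        · rw [if_pos rfl] at hz
          exact hz rfl
        · rw [if_neg hab, if_neg (by simpa using hnadj)] at hz
          exact hz rfl
    set T := Finset.univ.image ℓ with hT
    have hTcard : T.card = 2 * r + 1 - i := by
      rw [hT, Finset.card_image_of_injective _ hℓinj, Finset.card_univ, Fintype.card_fin]
    have hsplit := Finset.card_filter_add_card_filter_not
      (s := T) (fun s => s.isLeft = true)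
    have hL : (T.filter (fun s => s.isLeft = true)).card ≤ r - 2 := by
      have hsub : T.filter (fun s => s.isLeft = true) ⊆
          Finset.univ.image (Sum.inl : Fin (r - 2) → Fin (r - 2) ⊕ Fin 5) := by
        intro s hs
        rw [Finset.mem_filter] at hs
        rcases s with a | a
        · exact Finset.mem_image_of_mem _ (Finset.mem_univ a)
        · simp at hs
      calc (T.filter (fun s => s.isLeft = true)).card
          ≤ (Finset.univ.image (Sum.inl : Fin (r - 2) → Fin (r - 2) ⊕ Fin 5)).card :=
            Finset.card_le_card hsub
        _ ≤ (Finset.univ : Finset (Fin (r - 2))).card := Finset.card_image_le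
        _ = r - 2 := by rw [Finset.card_univ, Fintype.card_fin]
    have hR : (T.filter (fun s => ¬ s.isLeft = true)).card ≤ 2 := by
      by_contra hgt
      push_neg at hgt
      rw [Finset.two_lt_card_iff] at hgt
      obtain ⟨s1, s2, s3, hs1, hs2, hs3, h12, h13, h23⟩ := hgt
      rw [Finset.mem_filter] at hs1 hs2 hs3
      obtain ⟨hs1T, hs1r⟩ := hs1
      obtain ⟨hs2T, hs2r⟩ := hs2
      obtain ⟨hs3T, hs3r⟩ := hs3
      rcases s1 with a | a; · simp at hs1r
      rcases s2 with b | b; · simp at hs2r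
      rcases s3 with c | c; · simp at hs3r
      rw [hT, Finset.mem_image] at hs1T hs2T hs3T
      obtain ⟨x, -, hx⟩ := hs1T
      obtain ⟨y, -, hy⟩ := hs2T
      obtain ⟨z, -, hz⟩ := hs3T
      have hxy : x ≠ y := by rintro rfl; rw [hx] at hy; exact h12 hy
      have hxz : x ≠ z := by rintro rfl; rw [hx] at hz; exact h13 hz
      have hyz : y ≠ z := by rintro rfl; rw [hy] at hz; exact h23 hz
      have hab : a ≠ b := by intro h; apply h12; rw [h]
      have hbc : b ≠ c := by intro h; apply h23; rw [h]
      have hac : a ≠ c := by intro h; apply h13; rw [h]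
      exact no_triangle a b c (hadjuse x y hxy a b hx hy) (hadjuse y z hyz b c hy hz)
        (hadjuse x z hxz a c hx hz) hab hbc hac
    omega
  -- minimum degree bound
  · intro x
    exact le_of_eq (degree_eq r n hr k hk e x).symm
  -- minimum degree attained
  · exact ⟨⟨0, hn⟩, degree_eq r n hr k hk e _⟩
  -- no homomorphism to RK_r
  · rintro ⟨f, hf⟩
    have hk3 : 0 < 3 * k := by omega
    set u : Fin 5 → Fin n := fun a => e.symm (Sum.inr (a, ⟨0, hkpos⟩)) with hu
    set p : Fin (r - 2) → Fin n := fun j => e.symm (Sum.inl (j, ⟨0, hk3⟩)) with hp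
    have hvne : ∀ a b : Fin 5, a ≠ b → adj a b → f (u a) ≠ f (u b) := by
      intro a b hab hadj heq
      have huab : u a ≠ u b := by
        intro h
        rw [hu] at h
        have h2 := e.symm.injective h
        rw [Sum.inr.injEq, Prod.mk.injEq] at h2
        exact hab h2.1
      have h0 : w' (e (u a)) (e (u b)) = 0 := hf (u a) (u b) huab heq
      rw [hu] at h0
      simp only [Equiv.apply_symm_apply] at h0
      rw [w'_inr_inr, if_neg hab, if_pos hadj] at h0
      exact absurd h0 (by norm_num)
    have hpinj : Function.Injective (fun j => f (p j)) := by
      intro j j' hjj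
      by_contra hjne
      have hpne : p j ≠ p j' := by
        intro h
        rw [hp] at h
        have h2 := e.symm.injective h
        rw [Sum.inl.injEq, Prod.mk.injEq] at h2
        exact hjne h2.1
      have h0 : w' (e (p j)) (e (p j')) = 0 := hf _ _ hpne hjj
      rw [hp] at h0
      simp only [Equiv.apply_symm_apply] at h0
      rw [w'_inl_inl, if_neg hjne] at h0
      exact absurd h0 (by norm_num)
    set Q : Finset (Fin r) := Finset.univ.image (fun j => f (p j)) with hQ
    have hQcard : Q.card = r - 2 := by
      rw [hQ, Finset.card_image_of_injective _ hpinj, Finset.card_univ, Fintype.card_fin]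
    have hScard : (Finset.univ \ Q).card ≤ 2 := by
      rw [Finset.card_sdiff_of_subset (Finset.subset_univ Q), Finset.card_univ, Fintype.card_fin,
        hQcard]
      omega
    have hvS : ∀ a : Fin 5, f (u a) ∈ Finset.univ \ Q := by
      intro a
      rw [Finset.mem_sdiff]
      refine ⟨Finset.mem_univ _, ?_⟩
      rw [hQ, Finset.mem_image]
      rintro ⟨j, -, hj⟩
      have hupne : u a ≠ p j := by
        intro h
        rw [hu, hp] at h
        exact absurd (e.symm.injective h) (by simp)
      have h0 : w' (e (u a)) (e (p j)) = 0 := hf (u a) (p j) hupne hj.symm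
      rw [hu, hp] at h0
      simp only [Equiv.apply_symm_apply] at h0
      rw [w'_inr_inl] at h0
      exact absurd h0 (by norm_num)
    have h01 : f (u 0) ≠ f (u 1) := hvne 0 1 (by decide) (by decide)
    have h12 : f (u 1) ≠ f (u 2) := hvne 1 2 (by decide) (by decide)
    have h23 : f (u 2) ≠ f (u 3) := hvne 2 3 (by decide) (by decide)
    have h34 : f (u 3) ≠ f (u 4) := hvne 3 4 (by decide) (by decide)
    have h40 : f (u 4) ≠ f (u 0) := hvne 4 0 (by decide) (by decide)
    have h02 : f (u 0) = f (u 2) :=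
      three_in_two hScard (hvS 0) (hvS 1) (hvS 2) h01 h12
    have h24 : f (u 2) = f (u 4) :=
      three_in_two hScard (hvS 2) (hvS 3) (hvS 4) h23 h34
    exact h40 ((h02.trans h24).symm)
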